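/- Iterated concave homeomorphism inequality (equations (3.28)–(3.29), from inequality (3.16) of [khach]). Let φ : [0,1] → [0,1] be a homeomorphism with φ(0) = 0, φ(1) = 1, and φ concave. Let σ* ∈ (0,1) and ε ∈ (0,1), and set k := (1 − φ(εσ*)) / (1 − εσ*). Then for every m ∈ ℕ, the m-fold iterate φ∘φ∘⋯∘φ (m times) evaluated at σ* satisfies 1 > φ^{(m)}(σ*) ≥ k^m σ* + 1 − k^m. -/

import Mathlib

open Set Function

/-- **Iterated concave homeomorphism inequality (eqs. (3.28)–(3.29)).**
For a concave homeomorphism `φ` of `[0,1]` fixing `0` and `1`, `σ* ∈ (0,1)`,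
`ε ∈ (0,1)` and `k := (1 - φ(ε σ*))/(1 - ε σ*)`, the `m`-fold iterate of `φ`
at `σ*` satisfies `1 > φ^[m] σ* ≥ k^m σ* + 1 - k^m` for every `m`. -/
theorem iterated_concave_homeomorphism_inequality
    (φ : ℝ → ℝ) (σs ε k : ℝ)
    (hφ_cont : ContinuousOn φ (Icc 0 1))
    (hφ0 : φ 0 = 0) (hφ1 : φ 1 = 1)
    (hφ_mono : StrictMonoOn φ (Icc 0 1))
    (hφ_conc : ConcaveOn ℝ (Icc 0 1) φ)
    (hσs : σs ∈ Ioo (0:ℝ) 1) (hε : ε ∈ Ioo (0:ℝ) 1)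
    (hk : k = (1 - φ (ε * σs)) / (1 - ε * σs)) :
    ∀ m : ℕ, φ^[m] σs < 1 ∧ k ^ m * σs + 1 - k ^ m ≤ φ^[m] σs := by
  obtain ⟨hσ0, hσ1⟩ := hσs
  obtain ⟨hε0, hε1⟩ := hε
  set a := ε * σs with ha_def
  have ha0 : 0 < a := mul_pos hε0 hσ0
  have haσ : a < σs := by nlinarith
  have ha1 : a < 1 := lt_trans haσ hσ1
  have hmem_a : a ∈ Icc (0:ℝ) 1 := ⟨ha0.le, ha1.le⟩
  have hmem_1 : (1:ℝ) ∈ Icc (0:ℝ) 1 := right_mem_Icc.2 zero_le_one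
  have hmem_0 : (0:ℝ) ∈ Icc (0:ℝ) 1 := left_mem_Icc.2 zero_le_one
  have h1a : (0:ℝ) < 1 - a := by linarith
  -- φ x ≥ x on [0,1]
  have self_le : ∀ x ∈ Icc (0:ℝ) 1, x ≤ φ x := by
    rintro x ⟨hx0, hx1⟩
    have h := hφ_conc.2 hmem_0 hmem_1 (by linarith : (0:ℝ) ≤ 1 - x) hx0 (by ring)
    simp only [smul_eq_mul, hφ0, hφ1, mul_zero, mul_one, zero_add] at h
    linarith
  -- bounds on k
  have hφa_lt : φ a < 1 := by
    have := hφ_mono hmem_a hmem_1 ha1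
    rwa [hφ1] at this
  have hk0 : 0 < k := by
    rw [hk]; exact div_pos (by linarith) h1a
  have hk1 : k ≤ 1 := by
    rw [hk]
    rw [div_le_one h1a]
    have := self_le a hmem_a
    linarith
  -- chord inequality from concavity on [a, 1]
  have chord : ∀ x, a ≤ x → x ≤ 1 → 1 - k * (1 - x) ≤ φ x := by
    intro x hax hx1
    have ht0 : 0 ≤ (1 - x) / (1 - a) := div_nonneg (by linarith) h1a.le
    have ht1 : 0 ≤ (x - a) / (1 - a) := div_nonneg (by linarith) h1a.le
    have hsum : (1 - x) / (1 - a) + (x - a) / (1 - a) = 1 := by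
      field_simp
      ring
    have h := hφ_conc.2 hmem_a hmem_1 ht0 ht1 hsum
    simp only [smul_eq_mul, mul_one, hφ1] at h
    have harg : (1 - x) / (1 - a) * a + (x - a) / (1 - a) = x := by
      field_simp; ring
    rw [harg] at h
    calc 1 - k * (1 - x)
        = (1 - x) / (1 - a) * φ a + (x - a) / (1 - a) := by
          rw [hk]; field_simp; ring
      _ ≤ φ x := h
  intro m
  induction m with
  | zero => simpa using hσ1
  | succ n ih =>
    obtain ⟨ihlt, ihge⟩ := ih
    have hkm : k ^ n ≤ 1 := pow_le_one₀ hk0.le hk1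
    have hx_low : σs ≤ φ^[n] σs := by
      nlinarith [mul_nonneg (sub_nonneg.2 hkm) (by linarith : (0:ℝ) ≤ 1 - σs)]
    have hx_mem : φ^[n] σs ∈ Icc (0:ℝ) 1 := ⟨by linarith, ihlt.le⟩
    rw [Function.iterate_succ_apply']
    constructor
    · have := hφ_mono hx_mem hmem_1 ihlt
      rwa [hφ1] at this
    · have hc := chord _ (le_trans haσ.le hx_low) ihlt.le
      have hub : 1 - φ^[n] σs ≤ k ^ n * (1 - σs) := by nlinarith
      have hmul : k * (1 - φ^[n] σs) ≤ k * (k ^ n * (1 - σs)) :=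
        mul_le_mul_of_nonneg_left hub hk0.le
      have hps : k ^ (n + 1) = k * k ^ n := by ring
      nlinarith [hc]
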